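/- Pointwise estimate of the full gradient of a vector field by its tangential derivatives, curl and divergence (Lemma 5.1, estimate (5.1)): For every n ≥ 2 there is a constant C = C(n) with the following property. Let β = (β₁,…,β_n) be a differentiable ℝⁿ-valued function on an open subset of ℝⁿ, let Ñ be a vector with |Ñ| ≤ 1 and set q^{kl} = δ^{kl} − Ñ^k Ñ^l. Then at every point, |∂β|² ≤ C (Σ_{i,j,k,l} q^{kl} δ^{ij} ∂_k β_i ∂_l β_j + |curl β|² + |div β|²), where |∂β|² = Σ_{i,j} (∂_i β_j)², curl β_{ij} = ∂_i β_j − ∂_j β_i, |curl β|² = Σ_{i,j}(∂_i β_j − ∂_j β_i)², and div β = Σ_k ∂_k β_k. -/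

import Mathlib

open scoped BigOperators
open Set Matrix

noncomputable section

abbrev E' (n : ℕ) := EuclideanSpace ℝ (Fin n)

def Ball (n : ℕ) : Set (E' n) := Metric.closedBall 0 1

def Sphere' (n : ℕ) : Set (E' n) := Metric.sphere 0 1

variable {n : ℕ} {F : Type*} [NormedAddCommGroup F] [NormedSpace ℝ F]

/-- Partial derivative `∂u/∂y^a`. -/
def pd (a : Fin n) (u : E' n → ℝ) (y : E' n) : ℝ :=
  fderiv ℝ u y (EuclideanSpace.single a 1)

/-- Jacobian matrix `∂x^i/∂y^a`. -/
def jacM (x : E' n → E' n) (y : E' n) : Matrix (Fin n) (Fin n) ℝ :=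
  Matrix.of fun i a => pd a (fun z => x z i) y

/-- Metric `g_{ab} = Σ_i (∂x^i/∂y^a)(∂x^i/∂y^b)`. -/
def gMet (x : E' n → E' n) (y : E' n) : Matrix (Fin n) (Fin n) ℝ :=
  (jacM x y)ᵀ * jacM x y

def kappa (x : E' n → E' n) (y : E' n) : ℝ := (jacM x y).det

/-- Eulerian derivative `∂_i u = (∂y^a/∂x^i) ∂_a u`. -/
def epd (x : E' n → E' n) (i : Fin n) (u : E' n → ℝ) (y : E' n) : ℝ :=
  ∑ a, (jacM x y)⁻¹ a i * pd a u y

/-- Laplace–Beltrami operator `Δq = κ⁻¹ ∂_a (κ g^{ab} ∂_b q)`. -/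
def lapl (x : E' n → E' n) (q : E' n → ℝ) (y : E' n) : ℝ :=
  (kappa x y)⁻¹ *
    ∑ a, pd a (fun z => kappa x z * ∑ b, (gMet x z)⁻¹ a b * pd b q z) y

/-- Lagrangian divergence `div W = κ⁻¹ ∂_a (κ W^a)`. -/
def divL (x : E' n → E' n) (W : E' n → Fin n → ℝ) (y : E' n) : ℝ :=
  (kappa x y)⁻¹ * ∑ a, pd a (fun z => kappa x z * W z a) y

/-- Eulerian divergence `div u = ∂_k u^k`. -/
def divE (x : E' n → E' n) (u : E' n → Fin n → ℝ) (y : E' n) : ℝ :=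
  ∑ k, epd x k (fun z => u z k) y

/-- Eulerian curl `curl u_{ij} = ∂_i u_j − ∂_j u_i`. -/
def curlE (x : E' n → E' n) (u : E' n → Fin n → ℝ) (i j : Fin n) (y : E' n) : ℝ :=
  epd x i (fun z => u z j) y - epd x j (fun z => u z i) y

/-- Exterior unit (with respect to `g`) normal derivative on the unit sphere. -/
def gradN (x : E' n → E' n) (p : E' n → ℝ) (y : E' n) : ℝ :=
  (∑ a, ∑ b, (gMet x y)⁻¹ a b * y b * pd a p y) /
    Real.sqrt (∑ a, ∑ b, (gMet x y)⁻¹ a b * y a * y b)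

/-- Coordinate condition `|∂x/∂y|² + |∂y/∂x|² ≤ c₁²`. -/
def coordCond (x : E' n → E' n) (c₁ : ℝ) (y : E' n) : Prop :=
  (∑ i, ∑ a, (jacM x y i a) ^ 2) + (∑ i, ∑ a, ((jacM x y)⁻¹ i a) ^ 2) ≤ c₁ ^ 2

/-- Physical condition `∇_N p ≤ −c₀` on the boundary. -/
def physCond (x : E' n → E' n) (p : E' n → ℝ) (c₀ : ℝ) : Prop :=
  ∀ y ∈ Sphere' n, gradN x p y ≤ -c₀

/-- Material (time) derivative at fixed `y`. -/
def Dt (u : ℝ → E' n → F) : ℝ → E' n → F := fun t y => deriv (fun s => u s y) t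

/-- Iterated time derivative. -/
def Dts (k : ℕ) (u : ℝ → E' n → F) : ℝ → E' n → F := Dt^[k] u

/-- Joint space-time smoothness. -/
def SmoothST (u : ℝ → E' n → F) : Prop :=
  ContDiff ℝ (⊤ : ℕ∞) fun p : ℝ × E' n => u p.1 p.2

/-- `L²` Sobolev norm of order `r` on the unit ball. -/
def sobNorm (r : ℕ) (u : E' n → F) : ℝ :=
  ∑ j ∈ Finset.range (r + 1), (∫ y in Ball n, ‖iteratedFDeriv ℝ j u y‖ ^ 2) ^ ((1:ℝ)/2)

/-- `C^k` supremum norm on the unit ball. -/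
def ckNorm (k : ℕ) (u : E' n → F) : ℝ :=
  ∑ j ∈ Finset.range (k + 1), ⨆ y ∈ Ball n, ‖iteratedFDeriv ℝ j u y‖

/-- Hölder norm of order `a` on the set `s`. -/
def holderNormOn (s : Set (E' n)) (a : ℝ) (u : E' n → F) : ℝ :=
  if a ≤ 0 then ⨆ y ∈ s, ‖u y‖
  else
    (⨆ z ∈ s, ⨆ w ∈ s,
        ‖iteratedFDeriv ℝ (⌈a⌉₊ - 1) u z - iteratedFDeriv ℝ (⌈a⌉₊ - 1) u w‖ /
          ‖z - w‖ ^ (a - ((⌈a⌉₊ : ℝ) - 1))) +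
      ⨆ y ∈ s, ‖u y‖

/-- Hölder norm of order `a` on the unit ball. -/
def holderNorm (a : ℝ) (u : E' n → F) : ℝ := holderNormOn (Ball n) a u

/-- Space-time norm `|||u|||_{a,k}`. -/
def stNorm (T : ℝ) (a : ℝ) (k : ℕ) (u : ℝ → E' n → F) : ℝ :=
  ⨆ t ∈ Icc (0:ℝ) T, ∑ j ∈ Finset.range (k + 1), holderNorm a fun y => Dts j u t y

/-- The defining property of the pressure `p = Ψ(x)`:
`Δp = −(∂_i V^k)(∂_k V^i)` in `Ω`, `p = 0` on `∂Ω`. -/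
def IsPressure (x v : E' n → E' n) (p : E' n → ℝ) : Prop :=
  ContDiff ℝ (⊤ : ℕ∞) p ∧ (∀ y ∈ Sphere' n, p y = 0) ∧
    ∀ y ∈ Ball n,
      lapl x p y = -∑ i, ∑ k, epd x i (fun z => v z k) y * epd x k (fun z => v z i) y

/-- The pressure, selected by choice. -/
def pressureFn (x v : E' n → E' n) : E' n → ℝ := Classical.epsilon (IsPressure x v)

/-- The Euler map `Φ(x)_i = D_t² x_i + ∂_i p`. -/
def eulerMap (x : ℝ → E' n → E' n) : ℝ → E' n → Fin n → ℝ := fun t y i =>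
  Dts 2 x t y i + epd (x t) i (pressureFn (x t) (Dt x t)) y

/-- First variational derivative `Φ'(x)δx`. -/
def eulerMap' (x δx : ℝ → E' n → E' n) : ℝ → E' n → Fin n → ℝ := fun t y i =>
  deriv (fun r : ℝ => eulerMap (fun s z => x s z + r • δx s z) t y i) 0

/-- Second variational derivative `Φ''(x)(δx, εx)`. -/
def eulerMap'' (x δx εx : ℝ → E' n → E' n) : ℝ → E' n → Fin n → ℝ := fun t y i =>
  deriv (fun r : ℝ =>
    deriv (fun s : ℝ => eulerMap (fun τ z => x τ z + r • δx τ z + s • εx τ z) t y i) 0) 0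

/-- Modified linearized operator `L₁ δx = Φ'(x)δx − δx^k ∂_k Φ^i + δx^i div Φ`. -/
def modLin (x δx : ℝ → E' n → E' n) : ℝ → E' n → Fin n → ℝ := fun t y i =>
  eulerMap' x δx t y i
    - (∑ k, δx t y k * epd (x t) k (fun z => eulerMap x t z i) y)
    + δx t y i * ∑ k, epd (x t) k (fun z => eulerMap x t z k) y


set_option maxHeartbeats 4000000 in
lemma key_grad_est {n : ℕ} (A : Fin n → Fin n → ℝ) (N : Fin n → ℝ)
    (hN : (∑ i, N i ^ 2) ≤ 1) :
    (∑ i, ∑ k, (A k i) ^ 2) ≤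
      (4 * n + 4) *
        ((∑ i, ∑ k, ∑ l, ((if k = l then (1:ℝ) else 0) - N k * N l) * A k i * A l i)
          + (∑ i, ∑ j, (A i j - A j i) ^ 2) + (∑ k, A k k) ^ 2) := by
  set w : Fin n → ℝ := fun i => ∑ k, N k * A k i with hww
  set u : Fin n → ℝ := fun i => ∑ k, A i k * N k with huu
  set d : ℝ := ∑ k, A k k with hd
  set Nw : ℝ := ∑ i, N i * w i with hNwdef
  set B : Fin n → Fin n → ℝ := fun i k => A i k - N i * w k with hB
  set m : Fin n → ℝ := fun i => ∑ k, (A k i - A i k) * N k with hm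
  set sA : ℝ := ∑ i, ∑ k, (A k i) ^ 2 with hsA
  set sw : ℝ := ∑ i, (w i) ^ 2 with hsw
  set curl2 : ℝ := ∑ i, ∑ j, (A i j - A j i) ^ 2 with hcurl
  set sB : ℝ := ∑ i, ∑ k, (B i k) ^ 2 with hsB
  set Q : ℝ := ∑ i, ∑ k, ∑ l, ((if k = l then (1:ℝ) else 0) - N k * N l) * A k i * A l i
    with hQdef
  have hN2 : (0:ℝ) ≤ ∑ i, N i ^ 2 := by positivity
  -- Q = sA - sw
  have hQ : Q = sA - sw := by
    rw [hQdef, hsA, hsw, ← Finset.sum_sub_distrib]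
    refine Finset.sum_congr rfl fun i _ => ?_
    have h1 : ∑ k, ∑ l, (if k = l then (1:ℝ) else 0) * A k i * A l i
        = ∑ k, (A k i) ^ 2 := by
      refine Finset.sum_congr rfl fun k _ => ?_
      simp [ite_mul, sq]
    have h2 : ∑ k, ∑ l, (N k * N l) * A k i * A l i = (w i) ^ 2 := by
      rw [sq, hww, Finset.sum_mul_sum]
      exact Finset.sum_congr rfl fun k _ => Finset.sum_congr rfl fun l _ => by ring
    calc ∑ k, ∑ l, ((if k = l then (1:ℝ) else 0) - N k * N l) * A k i * A l i
        = (∑ k, ∑ l, (if k = l then (1:ℝ) else 0) * A k i * A l i)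
          - ∑ k, ∑ l, (N k * N l) * A k i * A l i := by
          rw [← Finset.sum_sub_distrib]
          refine Finset.sum_congr rfl fun k _ => ?_
          rw [← Finset.sum_sub_distrib]
          exact Finset.sum_congr rfl fun l _ => by ring
      _ = (∑ k, (A k i) ^ 2) - (w i) ^ 2 := by rw [h1, h2]
  -- sw ≤ sA
  have hswle : sw ≤ sA := by
    rw [hsw, hsA]
    refine Finset.sum_le_sum fun i _ => ?_
    calc (w i) ^ 2 = (∑ k, N k * A k i) ^ 2 := rfl
      _ ≤ (∑ k, N k ^ 2) * ∑ k, (A k i) ^ 2 := Finset.sum_mul_sq_le_sq_mul_sq _ _ _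
      _ ≤ 1 * ∑ k, (A k i) ^ 2 := by
          apply mul_le_mul_of_nonneg_right hN; positivity
      _ = ∑ k, (A k i) ^ 2 := one_mul _
  have hQnn : 0 ≤ Q := by rw [hQ]; linarith
  have hcol : ∀ k, ∑ i, N i * A i k = w k := fun k => rfl
  -- sB ≤ Q
  have hsBle : sB ≤ Q := by
    have expand : sB = (∑ k, ∑ i, (A i k)^2) - 2 * sw + (∑ i, N i ^2) * sw := by
      rw [hsB, hsw]
      rw [Finset.sum_comm]
      have e : ∀ k, ∑ i, (B i k) ^ 2
          = (∑ i, (A i k)^2) - 2 * w k ^ 2 + (∑ i, N i ^ 2) * w k ^ 2 := by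
        intro k
        have e1 : ∑ i, (B i k) ^ 2
            = ∑ i, ((A i k)^2 - 2 * w k * (N i * A i k) + (N i ^2) * w k ^2) := by
          refine Finset.sum_congr rfl fun i _ => ?_
          simp only [hB]; ring
        rw [e1, Finset.sum_add_distrib, Finset.sum_sub_distrib,
          show (∑ i, 2 * w k * (N i * A i k)) = 2 * w k * ∑ i, N i * A i k from
            (Finset.mul_sum _ _ _).symm,
          hcol k, ← Finset.sum_mul]
        ring
      rw [Finset.sum_congr rfl fun k _ => e k, Finset.sum_add_distrib,
        Finset.sum_sub_distrib, ← Finset.mul_sum, ← Finset.mul_sum]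
    have hsAcomm : (∑ k, ∑ i, (A i k)^2) = sA := by rw [hsA]
    have hswnn : 0 ≤ sw := by rw [hsw]; positivity
    have h3 : (∑ i, N i ^ 2) * sw ≤ 1 * sw := mul_le_mul_of_nonneg_right hN hswnn
    rw [hQ]
    linarith [expand, hsAcomm, h3]
  have hsBnn : 0 ≤ sB := by rw [hsB]; positivity
  -- Nw = d - tr B
  have hNwd : Nw = d - ∑ i, B i i := by
    rw [hNwdef, hd, show (∑ i, B i i) = ∑ i, (A i i - N i * w i) from rfl,
      Finset.sum_sub_distrib]
    ring
  have htr : (∑ i, B i i) ^ 2 ≤ n * sB := by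
    calc (∑ i, B i i) ^ 2 ≤ (Finset.univ : Finset (Fin n)).card * ∑ i, (B i i) ^2 :=
          sq_sum_le_card_mul_sum_sq
      _ = n * ∑ i, (B i i) ^ 2 := by rw [Finset.card_univ, Fintype.card_fin]
      _ ≤ n * sB := by
          apply mul_le_mul_of_nonneg_left _ (by positivity)
          rw [hsB]
          refine Finset.sum_le_sum fun i _ => ?_
          exact Finset.single_le_sum (fun k _ => sq_nonneg (B i k)) (Finset.mem_univ i)
  have hNw2 : Nw ^ 2 ≤ 2 * d ^ 2 + 2 * n * sB := by
    have hq : Nw ^ 2 = (d - ∑ i, B i i) ^ 2 := by rw [hNwd]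
    nlinarith [hq, htr, sq_nonneg (d + ∑ i, B i i)]
  -- P
  set P : Fin n → ℝ := fun i => ∑ k, B i k * N k with hP
  have hPle : (∑ i, (P i) ^ 2) ≤ sB := by
    rw [hsB]
    refine Finset.sum_le_sum fun i _ => ?_
    calc (P i)^2 ≤ (∑ k, (B i k)^2) * (∑ k, N k ^2) := Finset.sum_mul_sq_le_sq_mul_sq _ _ _
      _ ≤ (∑ k, (B i k)^2) * 1 := by
          apply mul_le_mul_of_nonneg_left hN; positivity
      _ = ∑ k, (B i k)^2 := mul_one _
  -- m bound
  have hmle : (∑ i, (m i) ^ 2) ≤ curl2 := by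
    rw [hcurl]
    refine Finset.sum_le_sum fun i _ => ?_
    calc (m i)^2 ≤ (∑ k, (A k i - A i k)^2) * (∑ k, N k ^2) :=
          Finset.sum_mul_sq_le_sq_mul_sq _ _ _
      _ ≤ (∑ k, (A k i - A i k)^2) * 1 := by
          apply mul_le_mul_of_nonneg_left hN; positivity
      _ = ∑ k, (A i k - A k i)^2 := by
          rw [mul_one]; exact Finset.sum_congr rfl fun k _ => by ring
  set Nm : ℝ := ∑ i, N i * m i with hNm
  set R : Fin n → ℝ := fun i => m i - N i * Nm with hR
  have hRle : (∑ i, (R i)^2) ≤ ∑ i, (m i)^2 := by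
    have e : (∑ i, (R i)^2)
        = (∑ i, (m i)^2) - 2 * Nm ^ 2 + (∑ i, N i ^2) * Nm ^2 := by
      have e1 : ∀ i, (R i)^2 = (m i)^2 - 2 * Nm * (N i * m i) + (N i ^2) * Nm ^2 := by
        intro i; simp only [hR]; ring
      rw [Finset.sum_congr rfl fun i _ => e1 i, Finset.sum_add_distrib,
        Finset.sum_sub_distrib,
        show (∑ i, 2 * Nm * (N i * m i)) = 2 * Nm * ∑ i, N i * m i from
          (Finset.mul_sum _ _ _).symm,
        ← hNm, ← Finset.sum_mul]
      ring
    nlinarith [sq_nonneg Nm]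
  -- t
  set t : Fin n → ℝ := fun i => w i - N i * Nw with ht
  have hNu : (∑ i, N i * u i) = ∑ k, w k * N k := by
    calc ∑ i, N i * u i = ∑ i, ∑ k, N i * (A i k * N k) := by
          exact Finset.sum_congr rfl fun i _ => Finset.mul_sum _ _ _
      _ = ∑ k, ∑ i, N i * (A i k * N k) := Finset.sum_comm
      _ = ∑ k, w k * N k := by
          refine Finset.sum_congr rfl fun k _ => ?_
          rw [hww, Finset.sum_mul]
          exact Finset.sum_congr rfl fun i _ => by ring
  have hmw : ∀ i, m i = w i - u i := by
    intro i
    rw [hm, hww, huu, ← Finset.sum_sub_distrib]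
    exact Finset.sum_congr rfl fun k _ => by ring
  have hNmNw : Nm = Nw - ∑ k, w k * N k := by
    rw [hNm, hNwdef, ← hNu,
      Finset.sum_congr rfl fun i _ => (by rw [hmw i]; ring :
        N i * m i = N i * w i - N i * u i),
      Finset.sum_sub_distrib]
  have hu : ∀ i, P i = u i - N i * (∑ k, w k * N k) := by
    intro i
    show (∑ k, (A i k - N i * w k) * N k) = (∑ k, A i k * N k) - N i * (∑ k, w k * N k)
    rw [Finset.mul_sum, ← Finset.sum_sub_distrib]
    exact Finset.sum_congr rfl fun k _ => by ring
  have htPR : ∀ i, t i = P i + R i := by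
    intro i
    show w i - N i * Nw = P i + R i
    rw [hu i, show R i = m i - N i * Nm from rfl, hmw i, hNmNw]
    ring
  have hswt : sw = (∑ i, (t i)^2) + (2 - ∑ i, N i ^ 2) * Nw ^ 2 := by
    have e1 : ∀ i, (w i)^2 = (t i)^2 + 2 * Nw * (N i * w i) - (N i ^2) * Nw ^2 := by
      intro i; show (w i)^2 = (w i - N i * Nw)^2 + 2*Nw*(N i * w i) - (N i^2)*Nw^2; ring
    rw [hsw, Finset.sum_congr rfl fun i _ => e1 i, Finset.sum_sub_distrib,
      Finset.sum_add_distrib,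
      show (∑ i, 2 * Nw * (N i * w i)) = 2 * Nw * ∑ i, N i * w i from
        (Finset.mul_sum _ _ _).symm,
      ← hNwdef, ← Finset.sum_mul]
    ring
  clear_value w u d Nw B m sA sw curl2 sB Q P Nm R t
  have htsum : (∑ i, (t i)^2) ≤ 2 * (∑ i, (P i)^2) + 2 * (∑ i, (R i)^2) := by
    calc (∑ i, (t i)^2) ≤ ∑ i, (2*(P i)^2 + 2*(R i)^2) := by
          refine Finset.sum_le_sum fun i _ => ?_
          have h1 : (t i) ^ 2 = (P i + R i) ^ 2 := by rw [htPR i]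
          have hexp : (P i + R i)^2 = (P i)^2 + 2*(P i * R i) + (R i)^2 := by ring
          linarith [h1, hexp, two_mul_le_add_sq (P i) (R i)]
      _ = 2 * (∑ i, (P i)^2) + 2 * (∑ i, (R i)^2) := by
          rw [Finset.sum_add_distrib, ← Finset.mul_sum, ← Finset.mul_sum]
  have hcn : (0:ℝ) ≤ (n:ℝ) := Nat.cast_nonneg n
  have hc2 : (n:ℝ) * sB ≤ (n:ℝ) * Q := mul_le_mul_of_nonneg_left hsBle hcn
  have hcurl2nn : 0 ≤ curl2 := by
    rw [hcurl]; exact Finset.sum_nonneg fun i _ => Finset.sum_nonneg fun j _ => sq_nonneg _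
  have hNwsq : (2 - ∑ i, N i ^ 2) * Nw ^ 2 ≤ 2 * Nw ^ 2 :=
    mul_le_mul_of_nonneg_right (by linarith [hN2]) (sq_nonneg Nw)
  have hd2 : (0:ℝ) ≤ d ^ 2 := sq_nonneg d
  have h7 : sA = Q + sw := by rw [hQ]; ring
  have hexp : (4 * (n:ℝ) + 4) * (Q + curl2 + d ^ 2)
      = 4 * ((n:ℝ) * Q) + 4 * ((n:ℝ) * curl2) + 4 * ((n:ℝ) * d ^ 2)
        + 4 * Q + 4 * curl2 + 4 * d ^ 2 := by ring
  linarith [hswt, htsum, hPle, hRle, hmle, hNw2, hc2, hsBle, hNwsq, hQnn,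
    hcurl2nn, hd2, h7, hexp, mul_nonneg hcn hcurl2nn, mul_nonneg hcn hd2,
    mul_nonneg hcn hQnn]

/-- pointwise estimate of the full gradient of a vector field by
tangential derivatives, curl and divergence (Lemma 5.1, estimate (5.1)). -/
theorem stmt6 (n : ℕ) (hn : 2 ≤ n) :
    ∃ C > 0, ∀ U : Set (E' n), IsOpen U →
      ∀ β : E' n → Fin n → ℝ,
        (∀ j : Fin n, ∀ y ∈ U, DifferentiableAt ℝ (fun z => β z j) y) →
        ∀ N : Fin n → ℝ, (∑ i, (N i) ^ 2) ≤ 1 →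
        ∀ y ∈ U,
          (∑ i, ∑ j, (pd i (fun z => β z j) y) ^ 2) ≤
            C * ((∑ i, ∑ j, ∑ k, ∑ l,
                    ((if k = l then (1:ℝ) else 0) - N k * N l) *
                      (if i = j then (1:ℝ) else 0) *
                      pd k (fun z => β z i) y * pd l (fun z => β z j) y)
              + (∑ i, ∑ j, (pd i (fun z => β z j) y - pd j (fun z => β z i) y) ^ 2)
              + (∑ k, pd k (fun z => β z k) y) ^ 2) := by
  refine ⟨4 * n + 4, by positivity, ?_⟩
  intro U _ β _ N hN y _
  have hkey := key_grad_est (fun k i => pd k (fun z => β z i) y) N hN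
  have hLHS : (∑ i, ∑ j, (pd i (fun z => β z j) y) ^ 2)
      = ∑ i, ∑ k, (pd k (fun z => β z i) y) ^ 2 := Finset.sum_comm
  have hQ4 : (∑ i, ∑ j, ∑ k, ∑ l,
        ((if k = l then (1:ℝ) else 0) - N k * N l) *
          (if i = j then (1:ℝ) else 0) *
          pd k (fun z => β z i) y * pd l (fun z => β z j) y)
      = ∑ i, ∑ k, ∑ l, ((if k = l then (1:ℝ) else 0) - N k * N l) *
          pd k (fun z => β z i) y * pd l (fun z => β z i) y := by
    refine Finset.sum_congr rfl fun i _ => ?_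
    rw [Finset.sum_eq_single i]
    · refine Finset.sum_congr rfl fun k _ => Finset.sum_congr rfl fun l _ => ?_
      simp
    · intro j _ hj
      apply Finset.sum_eq_zero; intro k _
      apply Finset.sum_eq_zero; intro l _
      simp [if_neg (Ne.symm hj)]
    · intro h; exact absurd (Finset.mem_univ i) h
  rw [hLHS, hQ4]
  exact hkey


end
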